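/- Let 0 < α < n and p measurable with p_+ < n/α; define q by 1/p(x) = α/n + 1/q(x). If p ∈ K_0^α(E) (fractional Kopaliani condition over a collection E), then both p ∈ K_0(E) and q ∈ K_0(E); conversely, if p, q ∈ K_0(E), then p ∈ K_0^α(E). -/

import Mathlib

open MeasureTheory ENNReal Set

/-- The Luxemburg modular. -/
noncomputable def modularV {n : ℕ} (p : (Fin n → ℝ) → ℝ≥0∞) (f : (Fin n → ℝ) → ℝ) : ℝ≥0∞ :=
  (∫⁻ x in {x | p x ≠ ∞}, (‖f x‖₊ : ℝ≥0∞) ^ (p x).toReal ∂volume) +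
    eLpNormEssSup f (volume.restrict {x | p x = ∞})

/-- The Luxemburg norm on the variable Lebesgue space `L^{p(·)}`. -/
noncomputable def vnorm {n : ℕ} (p : (Fin n → ℝ) → ℝ≥0∞) (f : (Fin n → ℝ) → ℝ) : ℝ :=
  sInf {l : ℝ | 0 < l ∧ modularV p (fun x => f x / l) ≤ 1}

namespace Stmt7Aux

variable {n : ℕ}

noncomputable def chi (E : Set (Fin n → ℝ)) : (Fin n → ℝ) → ℝ := E.indicator fun _ => (1:ℝ)

def Sset (r : (Fin n → ℝ) → ℝ≥0∞) (E : Set (Fin n → ℝ)) : Set ℝ :=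
  {l : ℝ | 0 < l ∧ modularV r (fun x => chi E x / l) ≤ 1}

lemma vnorm_eq (r : (Fin n → ℝ) → ℝ≥0∞) (E : Set (Fin n → ℝ)) :
    vnorm r (E.indicator fun _ => (1:ℝ)) = sInf (Sset r E) := rfl

lemma Sset_bddBelow (r : (Fin n → ℝ) → ℝ≥0∞) (E : Set (Fin n → ℝ)) :
    BddBelow (Sset r E) := ⟨0, fun l hl => hl.1.le⟩

lemma sInf_Sset_nonneg (r : (Fin n → ℝ) → ℝ≥0∞) (E : Set (Fin n → ℝ)) :
    0 ≤ sInf (Sset r E) := Real.sInf_nonneg fun l hl => hl.1.le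

lemma nnnorm_chi (E : Set (Fin n → ℝ)) {l : ℝ} (hl : 0 < l) (x : Fin n → ℝ) :
    (‖chi E x / l‖₊ : ℝ≥0∞) = E.indicator (fun _ => ENNReal.ofReal (1 / l)) x := by
  by_cases hx : x ∈ E
  · rw [chi, Set.indicator_of_mem hx, Set.indicator_of_mem hx,
      ← enorm_eq_nnnorm, Real.enorm_eq_ofReal (by positivity)]
  · rw [chi, Set.indicator_of_notMem hx, Set.indicator_of_notMem hx]
    simp

lemma mem_Sset (r : (Fin n → ℝ) → ℝ≥0∞) (hrm : Measurable r) (E : Set (Fin n → ℝ))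
    (hE : MeasurableSet E) (hfin : volume E ≠ ∞)
    (hr1 : ∀ᵐ x, 1 ≤ r x) :
    max 2 (2 * (volume E).toReal) ∈ Sset r E := by
  set l₀ := max 2 (2 * (volume E).toReal) with hl₀def
  have h2 : (2:ℝ) ≤ l₀ := le_max_left _ _
  have h2T : 2 * (volume E).toReal ≤ l₀ := le_max_right _ _
  have hl₀ : 0 < l₀ := by linarith
  refine ⟨hl₀, ?_⟩
  have hs : MeasurableSet {x : Fin n → ℝ | r x ≠ ∞} :=
    (hrm (measurableSet_singleton ∞)).compl
  have hS : eLpNormEssSup (fun x => chi E x / l₀) (volume.restrict {x | r x = ∞})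
      ≤ ENNReal.ofReal (1 / l₀) := by
    apply eLpNormEssSup_le_of_ae_bound (C := 1 / l₀)
    filter_upwards with x
    by_cases hx : x ∈ E
    · rw [chi, Set.indicator_of_mem hx, Real.norm_eq_abs, abs_of_nonneg (by positivity)]
    · rw [chi, Set.indicator_of_notMem hx]
      simp; positivity
  have hI : (∫⁻ x in {x | r x ≠ ∞}, (‖chi E x / l₀‖₊ : ℝ≥0∞) ^ (r x).toReal ∂volume)
      ≤ ENNReal.ofReal (1 / l₀) * volume E := by
    have hae : ∀ᵐ x ∂(volume.restrict {x : Fin n → ℝ | r x ≠ ∞}),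
        (‖chi E x / l₀‖₊ : ℝ≥0∞) ^ (r x).toReal
          ≤ E.indicator (fun _ => ENNReal.ofReal (1 / l₀)) x := by
      filter_upwards [ae_restrict_of_ae hr1, ae_restrict_mem hs] with x hx1 hxs
      rw [nnnorm_chi E hl₀ x]
      have ht : 1 ≤ (r x).toReal := by
        have := ENNReal.toReal_mono hxs hx1
        simpa using this
      by_cases hx : x ∈ E
      · rw [Set.indicator_of_mem hx]
        calc ENNReal.ofReal (1 / l₀) ^ (r x).toReal
            ≤ ENNReal.ofReal (1 / l₀) ^ (1:ℝ) := by
              apply ENNReal.rpow_le_rpow_of_exponent_ge _ ht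
              rw [ENNReal.ofReal_le_one]
              calc (1:ℝ)/l₀ ≤ 1/2 := by apply div_le_div_of_nonneg_left <;> linarith
              _ ≤ 1 := by norm_num
          _ = ENNReal.ofReal (1 / l₀) := ENNReal.rpow_one _
      · rw [Set.indicator_of_notMem hx,
          ENNReal.zero_rpow_of_pos (by linarith : (0:ℝ) < (r x).toReal)]
    calc (∫⁻ x in {x | r x ≠ ∞}, (‖chi E x / l₀‖₊ : ℝ≥0∞) ^ (r x).toReal ∂volume)
        ≤ ∫⁻ x in {x | r x ≠ ∞}, E.indicator (fun _ => ENNReal.ofReal (1 / l₀)) x ∂volume :=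
          lintegral_mono_ae hae
      _ ≤ ∫⁻ x, E.indicator (fun _ => ENNReal.ofReal (1 / l₀)) x ∂volume :=
          setLIntegral_le_lintegral _ _
      _ = ENNReal.ofReal (1 / l₀) * volume E := by
          rw [lintegral_indicator hE, setLIntegral_const]
  calc modularV r (fun x => chi E x / l₀)
      ≤ ENNReal.ofReal (1 / l₀) * volume E + ENNReal.ofReal (1 / l₀) := add_le_add hI hS
    _ ≤ 1 := by
        rw [← ENNReal.ofReal_toReal hfin, ← ENNReal.ofReal_mul (by positivity),
          ← ENNReal.ofReal_add (by positivity) (by positivity)]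
        rw [show (1:ℝ≥0∞) = ENNReal.ofReal 1 by simp]
        apply ENNReal.ofReal_le_ofReal
        have hT0 : 0 ≤ (volume E).toReal := ENNReal.toReal_nonneg
        have e1 : 1 / l₀ * (volume E).toReal ≤ 1/2 := by
          rw [div_mul_eq_mul_div, one_mul, div_le_iff₀ hl₀]
          linarith
        have e2 : (1:ℝ) / l₀ ≤ 1/2 := by
          apply div_le_div_of_nonneg_left <;> linarith
        linarith

lemma key_integral (r : (Fin n → ℝ) → ℝ≥0∞) (hrm : Measurable r) (E : Set (Fin n → ℝ))
    (hE : MeasurableSet E) {l : ℝ} (hl : 0 < l) (hmem : l ∈ Sset r E) :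
    (∫⁻ x, (E ∩ {x | r x ≠ ∞}).indicator
        (fun x => ENNReal.ofReal ((1/l) ^ (r x).toReal)) x ∂volume) ≤ 1 := by
  have hs : MeasurableSet {x : Fin n → ℝ | r x ≠ ∞} :=
    (hrm (measurableSet_singleton ∞)).compl
  have h1 : (∫⁻ x in {x | r x ≠ ∞}, (‖chi E x / l‖₊ : ℝ≥0∞) ^ (r x).toReal ∂volume) ≤ 1 :=
    le_trans le_self_add hmem.2
  refine le_trans ?_ h1
  rw [← lintegral_indicator hs]
  apply lintegral_mono
  intro x
  by_cases hx : x ∈ E ∩ {x | r x ≠ ∞}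
  · rw [Set.indicator_of_mem hx, Set.indicator_of_mem hx.2, nnnorm_chi E hl x,
      Set.indicator_of_mem hx.1, ENNReal.ofReal_rpow_of_pos (by positivity)]
  · rw [Set.indicator_of_notMem hx]; exact zero_le

lemma one_le_of_mem (r : (Fin n → ℝ) → ℝ≥0∞) (E : Set (Fin n → ℝ)) (hE : MeasurableSet E)
    (hpos : 0 < volume (E ∩ {x | r x = ∞})) {l : ℝ} (hmem : l ∈ Sset r E) : 1 ≤ l := by
  by_contra hl1
  push_neg at hl1
  have hl : 0 < l := hmem.1
  have hS : eLpNormEssSup (fun x => chi E x / l) (volume.restrict {x | r x = ∞}) ≤ 1 :=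
    le_trans le_add_self hmem.2
  have hae2 : ∀ᵐ x ∂(volume.restrict {x : Fin n → ℝ | r x = ∞}), x ∉ E := by
    filter_upwards [ae_le_eLpNormEssSup (f := fun x => chi E x / l)
      (μ := volume.restrict {x | r x = ∞})] with x hx
    intro hxE
    have hb : (‖chi E x / l‖₊ : ℝ≥0∞) ≤ 1 := le_trans hx hS
    rw [chi, Set.indicator_of_mem hxE, ← enorm_eq_nnnorm, Real.enorm_eq_ofReal (by positivity),
      ENNReal.ofReal_le_one] at hb
    have : 1 < 1 / l := by
      rw [lt_div_iff₀ hl]; linarith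
    linarith
  have hnull : (volume.restrict {x : Fin n → ℝ | r x = ∞}) E = 0 := by
    have := hae2
    rw [MeasureTheory.ae_iff] at this
    simpa [not_not] using this
  rw [Measure.restrict_apply hE] at hnull
  exact absurd hnull hpos.ne'

lemma transfer {E : Set (Fin n → ℝ)} (hE : MeasurableSet E)
    (hpos : 0 < volume E) (hfin : volume E ≠ ∞)
    {a b : (Fin n → ℝ) → ℝ≥0∞} (hbm : Measurable b)
    {γ : ℝ} (hγ0 : 0 < γ)
    (ha : ∀ x, a x ≠ ∞)
    (hb1 : ∀ᵐ x, 1 ≤ b x)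
    (hrel : ∀ᵐ x, 1 ≤ (a x).toReal ∧
        (b x = ∞ → (a x).toReal * γ = 1) ∧
        (b x ≠ ∞ → 0 < (b x).toReal ∧ (a x).toReal / (b x).toReal + (a x).toReal * γ = 1)) :
    sInf (Sset a E) ≤ 3 * (volume E).toReal ^ γ * sInf (Sset b E) := by
  set T := (volume E).toReal with hT
  have hT0 : 0 < T := ENNReal.toReal_pos hpos.ne' hfin
  set m := T ^ γ with hm
  have hm0 : 0 < m := Real.rpow_pos_of_pos hT0 γ
  have hSbne : (Sset b E).Nonempty := ⟨_, mem_Sset b hbm E hE hfin hb1⟩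
  have hmain : ∀ l ∈ Sset b E, 3 * m * l ∈ Sset a E := by
    intro l hlmem
    have hl : 0 < l := hlmem.1
    have hmod : modularV b (fun x => chi E x / l) ≤ 1 := hlmem.2
    have h3ml : 0 < 3 * m * l := by positivity
    refine ⟨h3ml, ?_⟩
    have hkey : ∀ᵐ x, x ∈ E ∩ {x | b x = ∞} → (1:ℝ) ≤ l := by
      by_cases hc : volume (E ∩ {x | b x = ∞}) = 0
      · have hae : ∀ᵐ x, x ∉ E ∩ {x | b x = ∞} := by
          rw [MeasureTheory.ae_iff]
          simp only [not_not]; exact hc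
        filter_upwards [hae] with x hx hx'
        exact absurd hx' hx
      · have h1l : 1 ≤ l := one_le_of_mem b E hE (zero_lt_iff.2 hc) hlmem
        filter_upwards with x _
        exact h1l
    -- pointwise bound for the integrand
    have hptwise : ∀ᵐ x,
        (‖chi E x / (3*m*l)‖₊ : ℝ≥0∞) ^ (a x).toReal ≤
          E.indicator (fun x => ENNReal.ofReal ((1/3) *
            ((if b x = ∞ then 0 else (1/l) ^ (b x).toReal) + T⁻¹))) x := by
      filter_upwards [hrel, hkey] with x hx hxk
      obtain ⟨hta1, hbinf, hbfin⟩ := hx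
      rw [nnnorm_chi E h3ml x]
      by_cases hxE : x ∈ E
      · rw [Set.indicator_of_mem hxE, Set.indicator_of_mem hxE,
          ENNReal.ofReal_rpow_of_pos (by positivity)]
        apply ENNReal.ofReal_le_ofReal
        set ta := (a x).toReal with hta
        have hstep1 : (1/(3*m*l)) ^ ta ≤ (1/3) * ((1/(m*l)) ^ ta) := by
          have he : ((1:ℝ)/(3*m*l)) ^ ta = (1/3)^ta * (1/(m*l))^ta := by
            rw [← Real.mul_rpow (by positivity) (by positivity)]
            congr 1
            field_simp
          rw [he]
          have h13 : ((1:ℝ)/3) ^ ta ≤ (1/3) := by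
            calc ((1:ℝ)/3)^ta ≤ (1/3)^(1:ℝ) :=
              Real.rpow_le_rpow_of_exponent_ge (by norm_num) (by norm_num) hta1
            _ = 1/3 := Real.rpow_one _
          exact mul_le_mul_of_nonneg_right h13 (Real.rpow_nonneg (by positivity) _)
        refine hstep1.trans ?_
        rw [mul_le_mul_iff_right₀ (by norm_num : (0:ℝ) < 1/3)]
        by_cases hbx : b x = ∞
        · have htaγ : ta * γ = 1 := hbinf hbx
          have h1l : 1 ≤ l := hxk ⟨hxE, hbx⟩
          rw [if_pos hbx, zero_add]
          have hstep : ((1:ℝ)/(m*l)) ^ ta ≤ (1/m) ^ ta := by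
            apply Real.rpow_le_rpow (by positivity) _ (by linarith)
            rw [div_le_div_iff₀ (by positivity) (by positivity)]
            nlinarith
          refine hstep.trans (le_of_eq ?_)
          calc ((1:ℝ)/m)^ta = (T ^ (-γ)) ^ ta := by
                rw [one_div, hm, ← Real.rpow_neg hT0.le]
            _ = T ^ (-γ * ta) := by rw [← Real.rpow_mul hT0.le]
            _ = T⁻¹ := by
                rw [show -γ * ta = -1 by rw [neg_mul, mul_comm, htaγ]]
                exact Real.rpow_neg_one T
        · obtain ⟨htb0, heq⟩ := hbfin hbx
          rw [if_neg hbx]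
          set tb := (b x).toReal with htb
          set θ := ta / tb with hθ
          set w := ta * γ with hw
          have hθ0 : 0 ≤ θ := div_nonneg (by linarith) htb0.le
          have hw0 : 0 ≤ w := mul_nonneg (by linarith) hγ0.le
          have hgm := Real.geom_mean_le_arith_mean2_weighted hθ0 hw0
            (Real.rpow_nonneg (by positivity : (0:ℝ) ≤ 1/l) tb)
            (inv_nonneg.2 hT0.le) heq
          have hLHS : ((1/l:ℝ)^tb)^θ * (T⁻¹)^w = (1/(m*l))^ta := by
            have e1 : ((1/l:ℝ)^tb)^θ = (1/l)^ta := by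
              rw [← Real.rpow_mul (by positivity)]
              congr 1
              rw [hθ, mul_comm, div_mul_cancel₀ _ htb0.ne']
            have e2 : ((T:ℝ)⁻¹)^w = (1/m)^ta := by
              rw [← Real.rpow_neg_one T, ← Real.rpow_mul hT0.le, one_div, hm,
                ← Real.rpow_neg hT0.le, ← Real.rpow_mul hT0.le]
              congr 1
              rw [hw]; ring
            rw [e1, e2, ← Real.mul_rpow (by positivity) (by positivity)]
            congr 1
            field_simp
          rw [hLHS] at hgm
          refine hgm.trans ?_
          have hθ1 : θ ≤ 1 := by nlinarith
          have hw1 : w ≤ 1 := by nlinarith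
          have hA0 : (0:ℝ) ≤ (1/l)^tb := Real.rpow_nonneg (by positivity) _
          have hB0 : (0:ℝ) ≤ T⁻¹ := by positivity
          nlinarith
      · rw [Set.indicator_of_notMem hxE, Set.indicator_of_notMem hxE,
          ENNReal.zero_rpow_of_pos (by linarith : (0:ℝ) < (a x).toReal)]
    -- now bound the modular
    have hempty : {x : Fin n → ℝ | a x = ∞} = (∅ : Set (Fin n → ℝ)) := by
      ext x; simp [ha x]
    have huniv : {x : Fin n → ℝ | a x ≠ ∞} = (Set.univ : Set (Fin n → ℝ)) := by
      ext x; simp [ha x]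
    rw [modularV, hempty, huniv, Measure.restrict_empty, eLpNormEssSup_measure_zero,
      add_zero, setLIntegral_univ]
    -- measurability of the auxiliary function
    have hsb : MeasurableSet {x : Fin n → ℝ | b x ≠ ∞} :=
      (hbm (measurableSet_singleton ∞)).compl
    have hmeasA : Measurable fun x : Fin n → ℝ =>
        (E ∩ {x | b x ≠ ∞}).indicator (fun x => ENNReal.ofReal ((1/l) ^ (b x).toReal)) x := by
      apply Measurable.indicator _ (hE.inter hsb)
      apply ENNReal.measurable_ofReal.comp
      have : (fun x : Fin n → ℝ => (1/l) ^ (b x).toReal)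
          = fun x => Real.exp (Real.log (1/l) * (b x).toReal) := by
        funext x
        rw [Real.rpow_def_of_pos (by positivity)]
      rw [this]
      exact Real.measurable_exp.comp (measurable_const.mul (ENNReal.measurable_toReal.comp hbm))
    calc (∫⁻ x, (‖chi E x / (3*m*l)‖₊ : ℝ≥0∞) ^ (a x).toReal ∂volume)
        ≤ ∫⁻ x, E.indicator (fun x => ENNReal.ofReal ((1/3) *
            ((if b x = ∞ then 0 else (1/l) ^ (b x).toReal) + T⁻¹))) x ∂volume :=
          lintegral_mono_ae hptwise
      _ ≤ ∫⁻ x, ENNReal.ofReal (1/3) *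
            ((E ∩ {x | b x ≠ ∞}).indicator (fun x => ENNReal.ofReal ((1/l) ^ (b x).toReal)) x
              + E.indicator (fun _ => ENNReal.ofReal T⁻¹) x) ∂volume := by
          apply lintegral_mono
          intro x
          beta_reduce
          by_cases hxE : x ∈ E
          · rw [Set.indicator_of_mem hxE, Set.indicator_of_mem hxE]
            by_cases hbx : b x = ∞
            · rw [if_pos hbx, Set.indicator_of_notMem (fun h => (h.2 : b x ≠ ∞) hbx), zero_add,
                zero_add, ← ENNReal.ofReal_mul (by norm_num)]
            · have hxmem : x ∈ E ∩ {x | b x ≠ ∞} := ⟨hxE, hbx⟩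
              rw [if_neg hbx, Set.indicator_of_mem hxmem,
                ← ENNReal.ofReal_add (Real.rpow_nonneg (by positivity) _) (by positivity),
                ← ENNReal.ofReal_mul (by norm_num)]
          · rw [Set.indicator_of_notMem hxE, Set.indicator_of_notMem hxE,
              Set.indicator_of_notMem (fun h => hxE h.1)]
            simp
      _ = ENNReal.ofReal (1/3) *
            ((∫⁻ x, (E ∩ {x | b x ≠ ∞}).indicator
                (fun x => ENNReal.ofReal ((1/l) ^ (b x).toReal)) x ∂volume)
              + ∫⁻ x, E.indicator (fun _ => ENNReal.ofReal T⁻¹) x ∂volume) := by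
          rw [lintegral_const_mul _ ?_]
          rw [lintegral_add_left hmeasA]
          exact hmeasA.add ((measurable_const.indicator hE))
      _ ≤ ENNReal.ofReal (1/3) * (1 + 1) := by
          apply mul_le_mul_right
          apply add_le_add
          · exact key_integral b hbm E hE hl hlmem
          · rw [lintegral_indicator hE, setLIntegral_const]
            rw [← ENNReal.ofReal_toReal hfin, ← ENNReal.ofReal_mul (by positivity), ← hT]
            rw [inv_mul_cancel₀ hT0.ne']
            simp
      _ ≤ 1 := by
          rw [show ((1:ℝ≥0∞) + 1) = ENNReal.ofReal 2 by norm_num,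
            ← ENNReal.ofReal_mul (by norm_num)]
          rw [show (1:ℝ≥0∞) = ENNReal.ofReal 1 by simp]
          apply ENNReal.ofReal_le_ofReal
          norm_num
  -- conclude
  have hbdd : BddBelow (Sset a E) := Sset_bddBelow a E
  have h2 : sInf (Sset a E) / (3 * m) ≤ sInf (Sset b E) := by
    apply le_csInf hSbne
    intro l hlmem
    rw [div_le_iff₀ (by positivity)]
    calc sInf (Sset a E) ≤ 3*m*l := csInf_le hbdd (hmain l hlmem)
      _ = l * (3*m) := by ring
  calc sInf (Sset a E) = (sInf (Sset a E) / (3*m)) * (3*m) := by field_simp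
    _ ≤ sInf (Sset b E) * (3*m) := mul_le_mul_of_nonneg_right h2 (by positivity)
    _ = 3 * m * sInf (Sset b E) := by ring

lemma lowerbd {E : Set (Fin n → ℝ)} (hE : MeasurableSet E)
    (hpos : 0 < volume E) (hfin : volume E ≠ ∞)
    {a b : (Fin n → ℝ) → ℝ≥0∞} (ham : Measurable a) (hbm : Measurable b)
    {γ : ℝ} (hγ0 : 0 < γ)
    (hrel : ∀ᵐ x, a x ≠ ∞ ∧ b x ≠ ∞ ∧ 1 ≤ (a x).toReal ∧ 1 ≤ (b x).toReal ∧
        ((a x).toReal)⁻¹ + ((b x).toReal)⁻¹ = 1 + γ) :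
    ((volume E).toReal / 2) ^ (1 + γ) ≤ sInf (Sset a E) * sInf (Sset b E) := by
  set T := (volume E).toReal with hT
  have hT0 : 0 < T := ENNReal.toReal_pos hpos.ne' hfin
  have ha1 : ∀ᵐ x, 1 ≤ a x := by
    filter_upwards [hrel] with x hx
    rw [show (1:ℝ≥0∞) = ENNReal.ofReal 1 by simp, ← ENNReal.ofReal_toReal hx.1]
    exact ENNReal.ofReal_le_ofReal hx.2.2.1
  have hb1 : ∀ᵐ x, 1 ≤ b x := by
    filter_upwards [hrel] with x hx
    rw [show (1:ℝ≥0∞) = ENNReal.ofReal 1 by simp, ← ENNReal.ofReal_toReal hx.2.1]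
    exact ENNReal.ofReal_le_ofReal hx.2.2.2.1
  have hSane : (Sset a E).Nonempty := ⟨_, mem_Sset a ham E hE hfin ha1⟩
  have hSbne : (Sset b E).Nonempty := ⟨_, mem_Sset b hbm E hE hfin hb1⟩
  have hsa : MeasurableSet {x : Fin n → ℝ | a x ≠ ∞} :=
    (ham (measurableSet_singleton ∞)).compl
  have hc0 : (0:ℝ) < (T/2) ^ (1+γ) := Real.rpow_pos_of_pos (by positivity) _
  have hmain : ∀ l ∈ Sset a E, ∀ k ∈ Sset b E, (T/2)^(1+γ) ≤ l * k := by
    intro l hlm k hkm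
    have hl : 0 < l := hlm.1
    have hk : 0 < k := hkm.1
    set R := (1+γ)⁻¹ with hR
    have hR0 : 0 < R := by positivity
    have hA := key_integral a ham E hE hl hlm
    have hB := key_integral b hbm E hE hk hkm
    have hmeasA : Measurable fun x : Fin n → ℝ =>
        (E ∩ {x | a x ≠ ∞}).indicator (fun x => ENNReal.ofReal ((1/l) ^ (a x).toReal)) x := by
      apply Measurable.indicator _ (hE.inter hsa)
      apply ENNReal.measurable_ofReal.comp
      have he : (fun x : Fin n → ℝ => (1/l) ^ (a x).toReal)
          = fun x => Real.exp (Real.log (1/l) * (a x).toReal) := by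
        funext x
        rw [Real.rpow_def_of_pos (by positivity)]
      rw [he]
      exact Real.measurable_exp.comp (measurable_const.mul (ENNReal.measurable_toReal.comp ham))
    have hpt : ∀ᵐ x, E.indicator (fun _ => ENNReal.ofReal ((1/(l*k)) ^ R)) x ≤
        (E ∩ {x | a x ≠ ∞}).indicator (fun x => ENNReal.ofReal ((1/l) ^ (a x).toReal)) x
        + (E ∩ {x | b x ≠ ∞}).indicator (fun x => ENNReal.ofReal ((1/k) ^ (b x).toReal)) x := by
      filter_upwards [hrel] with x hx
      obtain ⟨hafin, hbfin, hta1, htb1, hsum⟩ := hx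
      by_cases hxE : x ∈ E
      · have hxa : x ∈ E ∩ {x | a x ≠ ∞} := ⟨hxE, hafin⟩
        have hxb : x ∈ E ∩ {x | b x ≠ ∞} := ⟨hxE, hbfin⟩
        rw [Set.indicator_of_mem hxE, Set.indicator_of_mem hxa, Set.indicator_of_mem hxb,
          ← ENNReal.ofReal_add (Real.rpow_nonneg (by positivity) _)
            (Real.rpow_nonneg (by positivity) _)]
        apply ENNReal.ofReal_le_ofReal
        set ta := (a x).toReal with hta
        set tb := (b x).toReal with htb
        have hta0 : (0:ℝ) < ta := by linarith
        have htb0 : (0:ℝ) < tb := by linarith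
        set θ := R / ta with hθ
        set w := R / tb with hw
        have hθ0 : 0 ≤ θ := by positivity
        have hw0 : 0 ≤ w := by positivity
        have hsum' : θ + w = 1 := by
          rw [hθ, hw, hR, div_add_div _ _ hta0.ne' htb0.ne']
          rw [div_eq_one_iff_eq (by positivity)]
          field_simp at hsum ⊢
          nlinarith [hsum]
        have hgm := Real.geom_mean_le_arith_mean2_weighted hθ0 hw0
          (Real.rpow_nonneg (by positivity : (0:ℝ) ≤ 1/l) ta)
          (Real.rpow_nonneg (by positivity : (0:ℝ) ≤ 1/k) tb) hsum'
        have hLHS : ((1/l:ℝ)^ta)^θ * ((1/k:ℝ)^tb)^w = (1/(l*k))^R := by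
          rw [← Real.rpow_mul (by positivity), ← Real.rpow_mul (by positivity)]
          rw [show ta * θ = R by rw [hθ, mul_comm, div_mul_cancel₀ _ hta0.ne'],
            show tb * w = R by rw [hw, mul_comm, div_mul_cancel₀ _ htb0.ne']]
          rw [← Real.mul_rpow (by positivity) (by positivity)]
          congr 1
          field_simp
        rw [hLHS] at hgm
        have hθ1 : θ ≤ 1 := by nlinarith
        have hw1 : w ≤ 1 := by nlinarith
        have hA0 : (0:ℝ) ≤ (1/l)^ta := Real.rpow_nonneg (by positivity) _
        have hB0 : (0:ℝ) ≤ (1/k)^tb := Real.rpow_nonneg (by positivity) _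
        nlinarith
      · rw [Set.indicator_of_notMem hxE]
        exact zero_le
    have hInt : ENNReal.ofReal ((1/(l*k))^R) * volume E ≤ 2 := by
      calc ENNReal.ofReal ((1/(l*k))^R) * volume E
          = ∫⁻ x, E.indicator (fun _ => ENNReal.ofReal ((1/(l*k))^R)) x ∂volume := by
            rw [lintegral_indicator hE, setLIntegral_const]
        _ ≤ ∫⁻ x, ((E ∩ {x | a x ≠ ∞}).indicator
                (fun x => ENNReal.ofReal ((1/l) ^ (a x).toReal)) x
              + (E ∩ {x | b x ≠ ∞}).indicator
                (fun x => ENNReal.ofReal ((1/k) ^ (b x).toReal)) x) ∂volume :=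
            lintegral_mono_ae hpt
        _ = (∫⁻ x, (E ∩ {x | a x ≠ ∞}).indicator
                (fun x => ENNReal.ofReal ((1/l) ^ (a x).toReal)) x ∂volume)
              + ∫⁻ x, (E ∩ {x | b x ≠ ∞}).indicator
                (fun x => ENNReal.ofReal ((1/k) ^ (b x).toReal)) x ∂volume :=
            lintegral_add_left hmeasA _
        _ ≤ 1 + 1 := add_le_add hA hB
        _ = 2 := by norm_num
    have hreal : ((1/(l*k))^R) * T ≤ 2 := by
      have h2 := ENNReal.toReal_mono (by norm_num : (2:ℝ≥0∞) ≠ ∞) hInt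
      rw [ENNReal.toReal_mul, ENNReal.toReal_ofReal (Real.rpow_nonneg (by positivity) _)] at h2
      simpa using h2
    have hlk : (0:ℝ) < l * k := by positivity
    have hp : (0:ℝ) < (l*k)^R := Real.rpow_pos_of_pos hlk R
    have hc : T/2 ≤ (l*k)^R := by
      rw [one_div, Real.inv_rpow hlk.le] at hreal
      have h3 := mul_le_mul_of_nonneg_left hreal hp.le
      rw [← mul_assoc, mul_inv_cancel₀ hp.ne', one_mul] at h3
      linarith
    calc (T/2)^(1+γ) ≤ ((l*k)^R)^(1+γ) :=
        Real.rpow_le_rpow (by positivity) hc (by positivity)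
      _ = l*k := by
          rw [← Real.rpow_mul hlk.le, hR, inv_mul_cancel₀ (by positivity : (1+γ:ℝ) ≠ 0),
            Real.rpow_one]
  obtain ⟨l₀, hl₀⟩ := hSane
  have hSb_lb : (T/2)^(1+γ) / l₀ ≤ sInf (Sset b E) := by
    apply le_csInf hSbne
    intro k hk
    rw [div_le_iff₀ hl₀.1]
    calc (T/2)^(1+γ) ≤ l₀ * k := hmain l₀ hl₀ k hk
      _ = k * l₀ := by ring
  have hSb0 : 0 < sInf (Sset b E) := lt_of_lt_of_le (div_pos hc0 hl₀.1) hSb_lb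
  have hfinal : ∀ l ∈ Sset a E, (T/2)^(1+γ) / sInf (Sset b E) ≤ l := by
    intro l hl
    have hstep : (T/2)^(1+γ) / l ≤ sInf (Sset b E) := by
      apply le_csInf hSbne
      intro k hk
      rw [div_le_iff₀ hl.1]
      calc (T/2)^(1+γ) ≤ l * k := hmain l hl k hk
        _ = k * l := by ring
    rw [div_le_iff₀ hl.1] at hstep
    rw [div_le_iff₀ hSb0]
    linarith
  have hlast := le_csInf ⟨l₀, hl₀⟩ hfinal
  rw [div_le_iff₀ hSb0] at hlast
  calc ((volume E).toReal/2)^(1+γ) = (T/2)^(1+γ) := by rw [hT]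
    _ ≤ sInf (Sset a E) * sInf (Sset b E) := by
        have := hlast
        nlinarith [this]

end Stmt7Aux

open Stmt7Aux in
/-- Let `0 < α < n`, `p` measurable with `p_+ < n/α`, `q` defined by
`1/p(x) = α/n + 1/q(x)`. Then `p ∈ K_0^α(𝓔)` iff both `p ∈ K_0(𝓔)` and `q ∈ K_0(𝓔)`. -/
theorem stmt7 {n : ℕ} (hn : 0 < n) (α : ℝ) (h0 : 0 < α) (hα : α < n)
    (p p' q q' : (Fin n → ℝ) → ℝ≥0∞)
    (hp : Measurable p) (hp'm : Measurable p') (hqm : Measurable q) (hq'm : Measurable q')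
    (hp1 : ∀ x, 1 ≤ p x)
    (hpub : essSup p volume < (n : ℝ≥0∞) / ENNReal.ofReal α)
    (hconjp : ∀ x, 1 / p x + 1 / p' x = 1)
    (hconjq : ∀ x, 1 / q x + 1 / q' x = 1)
    (hqdef : ∀ x, 1 / p x = ENNReal.ofReal (α / n) + 1 / q x)
    (𝓔 : Set (Set (Fin n → ℝ)))
    (h𝓔 : ∀ E ∈ 𝓔, MeasurableSet E ∧ 0 < volume E ∧ volume E ≠ ∞) :
    (∃ C : ℝ, ∀ E ∈ 𝓔,
        (volume E).toReal ^ (α / n - 1)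
            * vnorm p' (Set.indicator E fun _ => (1:ℝ))
            * vnorm q (Set.indicator E fun _ => (1:ℝ)) ≤ C)
      ↔ ((∃ C : ℝ, ∀ E ∈ 𝓔,
            vnorm p (Set.indicator E fun _ => (1:ℝ))
              * vnorm p' (Set.indicator E fun _ => (1:ℝ)) ≤ C * (volume E).toReal)
          ∧ (∃ C : ℝ, ∀ E ∈ 𝓔,
            vnorm q (Set.indicator E fun _ => (1:ℝ))
              * vnorm q' (Set.indicator E fun _ => (1:ℝ)) ≤ C * (volume E).toReal)) := by
  have hn' : (0:ℝ) < n := by exact_mod_cast hn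
  set γ := α / n with hγdef
  have hγ0 : 0 < γ := by positivity
  have hγ1 : γ < 1 := by rw [hγdef, div_lt_one hn']; exact hα
  set a0 := ENNReal.ofReal γ with ha0def
  have ha00 : 0 < a0 := ENNReal.ofReal_pos.2 hγ0
  have ha0top : a0 ≠ ∞ := ENNReal.ofReal_ne_top
  have ha01le : a0 ≤ 1 := by rw [ha0def]; exact ENNReal.ofReal_le_one.2 hγ1.le
  have htγ : a0.toReal = γ := by rw [ha0def]; exact ENNReal.toReal_ofReal hγ0.le
  have hp0 : ∀ x, p x ≠ 0 := fun x => (lt_of_lt_of_le zero_lt_one (hp1 x)).ne'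
  have hpinv_le : ∀ x, (p x)⁻¹ ≤ 1 := fun x => ENNReal.inv_le_one.2 (hp1 x)
  have hqdef' : ∀ x, (p x)⁻¹ = a0 + (q x)⁻¹ := fun x => by
    have h := hqdef x; rwa [one_div, one_div] at h
  have hq1 : ∀ x, 1 ≤ q x := fun x => by
    apply ENNReal.inv_le_one.1
    calc (q x)⁻¹ ≤ a0 + (q x)⁻¹ := le_add_self
      _ = (p x)⁻¹ := (hqdef' x).symm
      _ ≤ 1 := hpinv_le x
  have hq0 : ∀ x, q x ≠ 0 := fun x => (lt_of_lt_of_le zero_lt_one (hq1 x)).ne'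
  have hpfin : ∀ x, p x ≠ ∞ := fun x => by
    intro h
    have h1 := hqdef' x
    rw [h, ENNReal.inv_top] at h1
    have h2 : a0 = 0 := (add_eq_zero.1 h1.symm).1
    exact ha00.ne' h2
  have hp'1 : ∀ x, 1 ≤ p' x := fun x => by
    apply ENNReal.inv_le_one.1
    have h := hconjp x; rw [one_div, one_div] at h
    calc (p' x)⁻¹ ≤ (p x)⁻¹ + (p' x)⁻¹ := le_add_self
      _ = 1 := h
  have hq'1 : ∀ x, 1 ≤ q' x := fun x => by
    apply ENNReal.inv_le_one.1
    have h := hconjq x; rw [one_div, one_div] at h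
    calc (q' x)⁻¹ ≤ (q x)⁻¹ + (q' x)⁻¹ := le_add_self
      _ = 1 := h
  have hq'0 : ∀ x, q' x ≠ 0 := fun x => (lt_of_lt_of_le zero_lt_one (hq'1 x)).ne'
  have hq'inv : ∀ x, a0 ≤ (q' x)⁻¹ := fun x => by
    have h1 : (q x)⁻¹ + (q' x)⁻¹ = 1 := by
      have h := hconjq x; rwa [one_div, one_div] at h
    have h3 : a0 + (q x)⁻¹ ≤ 1 := by rw [← hqdef' x]; exact hpinv_le x
    have h2 : (q x)⁻¹ ≤ 1 - a0 := ENNReal.le_sub_of_add_le_left ha0top h3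
    have h4 : (q' x)⁻¹ = 1 - (q x)⁻¹ :=
      ENNReal.eq_sub_of_add_eq (ENNReal.inv_ne_top.2 (hq0 x)) (by rw [add_comm]; exact h1)
    rw [h4]
    calc a0 = 1 - (1 - a0) := (ENNReal.sub_sub_cancel one_ne_top ha01le).symm
      _ ≤ 1 - (q x)⁻¹ := tsub_le_tsub_left h2 1
  have hq'fin : ∀ x, q' x ≠ ∞ := fun x => by
    intro h
    have h1 := hq'inv x
    rw [h, ENNReal.inv_top] at h1
    exact ha00.ne' (le_zero_iff.1 h1)
  have htp1 : ∀ x, 1 ≤ (p x).toReal := fun x => by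
    have h := ENNReal.toReal_mono (hpfin x) (hp1 x); simpa using h
  have htq'1 : ∀ x, 1 ≤ (q' x).toReal := fun x => by
    have h := ENNReal.toReal_mono (hq'fin x) (hq'1 x); simpa using h
  have ha0inv : a0⁻¹ = (n : ℝ≥0∞) / ENNReal.ofReal α := by
    rw [ha0def, hγdef, ENNReal.ofReal_div_of_pos hn', ENNReal.ofReal_natCast,
      ENNReal.inv_div (Or.inl (ENNReal.natCast_ne_top n))
        (Or.inr (ENNReal.ofReal_pos.2 h0).ne')]
  have haeq : ∀ᵐ x : (Fin n → ℝ) ∂volume, q x ≠ ∞ := by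
    filter_upwards [ENNReal.ae_le_essSup p (μ := volume)] with x hx
    intro hqi
    have h1 : p x < a0⁻¹ := by rw [ha0inv]; exact lt_of_le_of_lt hx hpub
    have h2 : a0 < (p x)⁻¹ := ENNReal.lt_inv_iff_lt_inv.1 h1
    rw [hqdef' x, hqi, ENNReal.inv_top, add_zero] at h2
    exact lt_irrefl _ h2
  have hfacts : ∀ᵐ x : Fin n → ℝ ∂volume,
      q x ≠ ∞ ∧
      ((p x).toReal)⁻¹ = γ + ((q x).toReal)⁻¹ ∧
      ((q x).toReal)⁻¹ + ((q' x).toReal)⁻¹ = 1 ∧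
      1 ≤ (q x).toReal := by
    filter_upwards [haeq] with x hqfin
    refine ⟨hqfin, ?_, ?_, ?_⟩
    · have h := congrArg ENNReal.toReal (hqdef' x)
      rwa [ENNReal.toReal_add ha0top (ENNReal.inv_ne_top.2 (hq0 x)), ENNReal.toReal_inv,
        ENNReal.toReal_inv, htγ] at h
    · have h1 : (q x)⁻¹ + (q' x)⁻¹ = 1 := by
        have h := hconjq x; rwa [one_div, one_div] at h
      have h := congrArg ENNReal.toReal h1
      rwa [ENNReal.toReal_add (ENNReal.inv_ne_top.2 (hq0 x)) (ENNReal.inv_ne_top.2 (hq'0 x)),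
        ENNReal.toReal_inv, ENNReal.toReal_inv, ENNReal.toReal_one] at h
    · have h := ENNReal.toReal_mono hqfin (hq1 x); simpa using h
  have hrel1 : ∀ᵐ x : Fin n → ℝ ∂volume, 1 ≤ (p x).toReal ∧
      (q x = ∞ → (p x).toReal * γ = 1) ∧
      (q x ≠ ∞ → 0 < (q x).toReal ∧ (p x).toReal / (q x).toReal + (p x).toReal * γ = 1) := by
    filter_upwards [hfacts] with x hx
    obtain ⟨hqfin, e1, e2, htq1⟩ := hx
    refine ⟨htp1 x, fun h => absurd h hqfin, fun _ => ⟨by linarith, ?_⟩⟩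
    have htp0 : (p x).toReal ≠ 0 := by have := htp1 x; linarith
    have he : (p x).toReal / (q x).toReal + (p x).toReal * γ
        = (p x).toReal * (γ + ((q x).toReal)⁻¹) := by rw [div_eq_mul_inv]; ring
    rw [he, ← e1, mul_inv_cancel₀ htp0]
  have hrel2 : ∀ᵐ x : Fin n → ℝ ∂volume, 1 ≤ (q' x).toReal ∧
      (p' x = ∞ → (q' x).toReal * γ = 1) ∧
      (p' x ≠ ∞ → 0 < (p' x).toReal ∧
        (q' x).toReal / (p' x).toReal + (q' x).toReal * γ = 1) := by
    filter_upwards [hfacts] with x hx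
    obtain ⟨hqfin, e1, e2, htq1⟩ := hx
    have htq'0 : ((q' x).toReal) ≠ 0 := by have := htq'1 x; linarith
    refine ⟨htq'1 x, ?_, ?_⟩
    · intro hpi
      have hp'x : (p' x)⁻¹ = 0 := by rw [hpi, ENNReal.inv_top]
      have h1 : (p x)⁻¹ = 1 := by
        have h := hconjp x; rwa [one_div, one_div, hp'x, add_zero] at h
      have htp : (p x).toReal = 1 := by
        have h := congrArg ENNReal.toReal h1
        rw [ENNReal.toReal_inv, ENNReal.toReal_one] at h
        exact inv_eq_one.1 h
      have h2 : ((q' x).toReal)⁻¹ = γ := by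
        rw [htp] at e1
        simp at e1
        linarith
      have h3 := mul_inv_cancel₀ htq'0
      rwa [h2] at h3
    · intro hp'fin
      have hp'0 : p' x ≠ 0 := (lt_of_lt_of_le zero_lt_one (hp'1 x)).ne'
      have htp'1 : 1 ≤ (p' x).toReal := by
        have h := ENNReal.toReal_mono hp'fin (hp'1 x); simpa using h
      refine ⟨by linarith, ?_⟩
      have e3 : ((p x).toReal)⁻¹ + ((p' x).toReal)⁻¹ = 1 := by
        have h1 := hconjp x; rw [one_div, one_div] at h1
        have h := congrArg ENNReal.toReal h1
        rwa [ENNReal.toReal_add (ENNReal.inv_ne_top.2 (hp0 x)) (ENNReal.inv_ne_top.2 hp'0),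
          ENNReal.toReal_inv, ENNReal.toReal_inv, ENNReal.toReal_one] at h
      have h4 : ((q' x).toReal)⁻¹ = ((p' x).toReal)⁻¹ + γ := by linarith
      have he : (q' x).toReal / (p' x).toReal + (q' x).toReal * γ
          = (q' x).toReal * (((p' x).toReal)⁻¹ + γ) := by rw [div_eq_mul_inv]; ring
      rw [he, ← h4, mul_inv_cancel₀ htq'0]
  have hrel3 : ∀ᵐ x : Fin n → ℝ ∂volume, p x ≠ ∞ ∧ q' x ≠ ∞ ∧ 1 ≤ (p x).toReal ∧
      1 ≤ (q' x).toReal ∧ ((p x).toReal)⁻¹ + ((q' x).toReal)⁻¹ = 1 + γ := by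
    filter_upwards [hfacts] with x hx
    obtain ⟨hqfin, e1, e2, htq1⟩ := hx
    exact ⟨hpfin x, hq'fin x, htp1 x, htq'1 x, by linarith⟩
  constructor
  · rintro ⟨C, hC⟩
    constructor
    · refine ⟨3*C, fun E hEmem => ?_⟩
      obtain ⟨hEm, hEpos, hEfin⟩ := h𝓔 E hEmem
      set T := (volume E).toReal with hTdef
      have hT0 : 0 < T := ENNReal.toReal_pos hEpos.ne' hEfin
      rw [vnorm_eq, vnorm_eq]
      have ht1 := transfer hEm hEpos hEfin hqm hγ0 hpfin
        (Filter.Eventually.of_forall hq1) hrel1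
      have hnn' := sInf_Sset_nonneg p' E
      have hnq := sInf_Sset_nonneg q E
      have hCE := hC E hEmem
      rw [vnorm_eq, vnorm_eq] at hCE
      have hTpow : T * T^(γ-1) = T^γ := by
        have he : T^(1:ℝ) * T^(γ-1) = T^(1+(γ-1)) := (Real.rpow_add hT0 1 (γ-1)).symm
        rw [Real.rpow_one] at he
        rw [he]; congr 1; ring
      calc sInf (Sset p E) * sInf (Sset p' E)
          ≤ (3*T^γ*sInf (Sset q E)) * sInf (Sset p' E) :=
            mul_le_mul_of_nonneg_right ht1 hnn'
        _ = 3*T*(T^(γ-1) * sInf (Sset p' E) * sInf (Sset q E)) := by rw [← hTpow]; ring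
        _ ≤ 3*T*C := mul_le_mul_of_nonneg_left hCE (by positivity)
        _ = 3*C*T := by ring
    · refine ⟨3*C, fun E hEmem => ?_⟩
      obtain ⟨hEm, hEpos, hEfin⟩ := h𝓔 E hEmem
      set T := (volume E).toReal with hTdef
      have hT0 : 0 < T := ENNReal.toReal_pos hEpos.ne' hEfin
      rw [vnorm_eq, vnorm_eq]
      have ht2 := transfer hEm hEpos hEfin hp'm hγ0 hq'fin
        (Filter.Eventually.of_forall hp'1) hrel2
      have hnn' := sInf_Sset_nonneg p' E
      have hnq := sInf_Sset_nonneg q E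
      have hCE := hC E hEmem
      rw [vnorm_eq, vnorm_eq] at hCE
      have hTpow : T * T^(γ-1) = T^γ := by
        have he : T^(1:ℝ) * T^(γ-1) = T^(1+(γ-1)) := (Real.rpow_add hT0 1 (γ-1)).symm
        rw [Real.rpow_one] at he
        rw [he]; congr 1; ring
      calc sInf (Sset q E) * sInf (Sset q' E)
          ≤ sInf (Sset q E) * (3*T^γ*sInf (Sset p' E)) :=
            mul_le_mul_of_nonneg_left ht2 hnq
        _ = 3*T*(T^(γ-1) * sInf (Sset p' E) * sInf (Sset q E)) := by rw [← hTpow]; ring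
        _ ≤ 3*T*C := mul_le_mul_of_nonneg_left hCE (by positivity)
        _ = 3*C*T := by ring
  · rintro ⟨⟨C₁, hC₁⟩, ⟨C₂, hC₂⟩⟩
    refine ⟨4*C₁*C₂, fun E hEmem => ?_⟩
    obtain ⟨hEm, hEpos, hEfin⟩ := h𝓔 E hEmem
    set T := (volume E).toReal with hTdef
    have hT0 : 0 < T := ENNReal.toReal_pos hEpos.ne' hEfin
    rw [vnorm_eq, vnorm_eq]
    have hlow := lowerbd hEm hEpos hEfin hp hq'm hγ0 hrel3
    rw [← hTdef] at hlow
    have h1 := hC₁ E hEmem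
    have h2 := hC₂ E hEmem
    rw [vnorm_eq, vnorm_eq] at h1 h2
    have hNp0 := sInf_Sset_nonneg p E
    have hNp'0 := sInf_Sset_nonneg p' E
    have hNq0 := sInf_Sset_nonneg q E
    have hNq'0 := sInf_Sset_nonneg q' E
    have hC10 : 0 ≤ C₁ := by
      by_contra h; push_neg at h
      nlinarith [mul_nonneg hNp0 hNp'0]
    have hC20 : 0 ≤ C₂ := by
      by_contra h; push_neg at h
      nlinarith [mul_nonneg hNq0 hNq'0]
    have hprod : (sInf (Sset p E) * sInf (Sset p' E)) * (sInf (Sset q E) * sInf (Sset q' E))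
        ≤ (C₁*T)*(C₂*T) :=
      mul_le_mul h1 h2 (mul_nonneg hNq0 hNq'0) (mul_nonneg hC10 hT0.le)
    have hkey : (T/2)^(1+γ) * (sInf (Sset p' E) * sInf (Sset q E)) ≤ C₁*C₂*(T*T) := by
      calc (T/2)^(1+γ) * (sInf (Sset p' E) * sInf (Sset q E))
          ≤ (sInf (Sset p E) * sInf (Sset q' E)) * (sInf (Sset p' E) * sInf (Sset q E)) :=
            mul_le_mul_of_nonneg_right hlow (mul_nonneg hNp'0 hNq0)
        _ = (sInf (Sset p E) * sInf (Sset p' E)) * (sInf (Sset q E) * sInf (Sset q' E)) := by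
            ring
        _ ≤ (C₁*T)*(C₂*T) := hprod
        _ = C₁*C₂*(T*T) := by ring
    have hDeq : (T/2)^(1+γ) = T^(1+γ) / 2^(1+γ) := Real.div_rpow hT0.le (by norm_num) _
    have hTT : T^(γ-1) * (T*T) = T^(1+γ) := by
      have e1 : T^(γ-1)*T^(1:ℝ) = T^(γ-1+1) := (Real.rpow_add hT0 _ _).symm
      have e2 : T^(γ-1+1)*T^(1:ℝ) = T^(γ-1+1+1) := (Real.rpow_add hT0 _ _).symm
      rw [Real.rpow_one] at e1 e2
      calc T^(γ-1)*(T*T) = (T^(γ-1)*T)*T := by ring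
        _ = T^(γ-1+1)*T := by rw [e1]
        _ = T^(γ-1+1+1) := e2
        _ = T^(1+γ) := by congr 1; ring
    have hX0 : 0 < T^(1+γ) := Real.rpow_pos_of_pos hT0 _
    have hY0 : (0:ℝ) < 2^(1+γ) := Real.rpow_pos_of_pos (by norm_num) _
    have h6 : T^(γ-1) * ((T/2)^(1+γ)*(sInf (Sset p' E) * sInf (Sset q E)))
        ≤ T^(γ-1) * (C₁*C₂*(T*T)) :=
      mul_le_mul_of_nonneg_left hkey (Real.rpow_nonneg hT0.le _)
    rw [hDeq] at h6
    have h8 : T^(γ-1)*sInf (Sset p' E)*sInf (Sset q E) ≤ C₁*C₂*2^(1+γ) := by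
      have h9 : (T^(γ-1)*sInf (Sset p' E)*sInf (Sset q E)) * T^(1+γ)
          ≤ (C₁*C₂*2^(1+γ)) * T^(1+γ) := by
        have h10 := mul_le_mul_of_nonneg_left h6 hY0.le
        calc (T^(γ-1)*sInf (Sset p' E)*sInf (Sset q E)) * T^(1+γ)
            = 2^(1+γ) * (T^(γ-1)*(T^(1+γ)/2^(1+γ)*(sInf (Sset p' E) * sInf (Sset q E)))) := by
              field_simp
          _ ≤ 2^(1+γ) * (T^(γ-1)*(C₁*C₂*(T*T))) := h10
          _ = (C₁*C₂*2^(1+γ)) * T^(1+γ) := by rw [← hTT]; ring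
      exact le_of_mul_le_mul_right h9 hX0
    have h2le4 : (2:ℝ)^(1+γ) ≤ 4 := by
      have e1 : (2:ℝ)^(1+γ) = 2 * 2^γ := by
        rw [Real.rpow_add (by norm_num : (0:ℝ) < 2), Real.rpow_one]
      have e2 : (2:ℝ)^γ ≤ 2^(1:ℝ) :=
        Real.rpow_le_rpow_of_exponent_le (by norm_num) (by linarith)
      rw [Real.rpow_one] at e2
      rw [e1]; linarith
    calc T^(γ-1)*sInf (Sset p' E)*sInf (Sset q E) ≤ C₁*C₂*2^(1+γ) := h8
      _ ≤ C₁*C₂*4 := mul_le_mul_of_nonneg_left h2le4 (mul_nonneg hC10 hC20)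
      _ = 4*C₁*C₂ := by ring
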